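/- Let h and k be coprime odd positive integers. Then k·B₁(h,k) + h·B₁(k,h) = (1/2)·(h-1)·(k-1). -/

import Mathlib

/-- The sawtooth function `((x))`: equals `x - ⌊x⌋ - 1/2` if `x` is not an integer,
and `0` if `x` is an integer. -/
def saw (x : ℚ) : ℚ := if x = (⌊x⌋ : ℚ) then 0 else x - ⌊x⌋ - 1/2

/-- `B₁(h,k) = Σ_{j=1}^{k-1} (-1)^{j+⌊hj/k⌋}·⌊hj/k⌋`. -/
noncomputable def B1 (h k : ℤ) : ℚ :=
  ∑ j ∈ Finset.Icc (1 : ℤ) (k - 1),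
    (-1 : ℚ) ^ (j + ⌊((h * j : ℤ) : ℚ) / (k : ℚ)⌋) * (⌊((h * j : ℤ) : ℚ) / (k : ℚ)⌋ : ℚ)

open Finset

private lemma neg_one_zpow_congr {a b : ℤ} (hab : a % 2 = b % 2) : (-1:ℚ)^a = (-1:ℚ)^b := by
  obtain ⟨t, ht⟩ : ∃ t, b = a + 2*t := ⟨(b-a)/2, by omega⟩
  subst ht
  rw [zpow_add₀ (by norm_num : (-1:ℚ) ≠ 0), zpow_mul]
  norm_num

private lemma neg_one_zpow_add (a b : ℤ) : (-1:ℚ)^(a+b) = (-1:ℚ)^a * (-1:ℚ)^b :=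
  zpow_add₀ (by norm_num) a b

private lemma odd_mul_emod_two {h t : ℤ} (hh : h % 2 = 1) : (h * t) % 2 = t % 2 := by
  conv_lhs => rw [Int.mul_emod, hh]
  omega

private lemma sum_sign_mul_nat : ∀ n : ℕ, ∑ i ∈ Icc (1:ℤ) (n:ℤ), (-1:ℚ)^i * (2*i-1) = (-1:ℚ)^(n:ℤ) * (n:ℤ) := by
  intro n
  induction n with
  | zero => simp
  | succ n ih =>
    push_cast
    rw [show Icc (1:ℤ) ((n:ℤ)+1) = insert ((n:ℤ)+1) (Icc 1 (n:ℤ)) by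
        ext x; simp only [mem_insert, mem_Icc]; omega,
      Finset.sum_insert (by simp only [mem_Icc]; omega), ih, neg_one_zpow_add]
    push_cast
    ring

private lemma sum_sign_mul (g : ℤ) (hg : 0 ≤ g) :
    ∑ i ∈ Icc (1:ℤ) g, (-1:ℚ)^i * (2*i-1) = (-1:ℚ)^g * g := by
  have : g = (g.toNat : ℤ) := by omega
  rw [this]; exact sum_sign_mul_nat _

private lemma sum_sign_even_nat : ∀ n : ℕ, ∑ i ∈ Icc (1:ℤ) (2*(n:ℤ)), (-1:ℚ)^i = 0 := by
  intro n
  induction n with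
  | zero => simp
  | succ n ih =>
    have h1 : Icc (1:ℤ) (2*((n:ℤ)+1)) = insert (2*(n:ℤ)+2) (insert (2*(n:ℤ)+1) (Icc (1:ℤ) (2*(n:ℤ)))) := by
      ext x; simp only [mem_insert, mem_Icc]; omega
    push_cast
    rw [h1, Finset.sum_insert (by simp only [mem_insert, mem_Icc]; omega),
      Finset.sum_insert (by simp only [mem_Icc]; omega), ih,
      neg_one_zpow_congr (a := 2*(n:ℤ)+2) (b := 0) (by omega),
      neg_one_zpow_congr (a := 2*(n:ℤ)+1) (b := 1) (by omega)]
    norm_num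

private lemma sum_sign_even {m : ℤ} (hm : 0 ≤ m) (hm2 : m % 2 = 0) :
    ∑ i ∈ Icc (1:ℤ) m, (-1:ℚ)^i = 0 := by
  have : m = 2 * ((m/2).toNat : ℤ) := by omega
  rw [this]; exact sum_sign_even_nat _

private lemma sum_alt : ∀ n : ℕ, ∑ μ ∈ Ico (0:ℤ) (2*(n:ℤ)+1), (-1:ℚ)^μ * μ = n := by
  intro n
  induction n with
  | zero =>
    rw [show Ico (0:ℤ) (2*((0:ℕ):ℤ)+1) = {0} by ext x; simp; omega]
    simp
  | succ n ih =>
    have h1 : Ico (0:ℤ) (2*((n:ℤ)+1)+1) = insert (2*(n:ℤ)+2) (insert (2*(n:ℤ)+1) (Ico (0:ℤ) (2*(n:ℤ)+1))) := by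
      ext x; simp only [mem_insert, mem_Ico]; omega
    push_cast
    rw [h1, Finset.sum_insert (by simp only [mem_insert, mem_Ico]; omega),
      Finset.sum_insert (by simp only [mem_Ico]; omega), ih,
      neg_one_zpow_congr (a := 2*(n:ℤ)+2) (b := 0) (by omega),
      neg_one_zpow_congr (a := 2*(n:ℤ)+1) (b := 1) (by omega)]
    push_cast
    ring

private lemma floor_cast_div (a b : ℤ) (hb : 0 < b) : ⌊((a:ℚ))/((b:ℚ))⌋ = a / b := by
  lift b to ℕ using hb.le
  exact_mod_cast Rat.floor_intCast_div_natCast a b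

private lemma B1_expand (h k : ℤ) (hh : 0 < h) (hk : 0 < k) (hco : IsCoprime h k) :
    (k:ℚ) * B1 h k = ∑ j ∈ Icc (1:ℤ) (k-1), ∑ i ∈ Icc (1:ℤ) (h-1),
      (if k*i < h*j then (-1:ℚ)^(i+j) * ((k:ℚ)*(2*(i:ℚ)-1)) else 0) := by
  rw [B1, Finset.mul_sum]
  refine Finset.sum_congr rfl ?_
  intro j hj
  simp only [mem_Icc] at hj
  rw [floor_cast_div _ _ hk]
  set g := (h*j)/k with hgdef
  have hg0 : 0 ≤ g := Int.ediv_nonneg (by nlinarith) hk.le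
  have hgh : g ≤ h - 1 := by
    have : g < h := (Int.ediv_lt_iff_lt_mul hk).2 (by nlinarith)
    omega
  have hfil : Icc (1:ℤ) g = (Icc (1:ℤ) (h-1)).filter (fun i => k*i < h*j) := by
    ext i
    simp only [mem_Icc, mem_filter]
    constructor
    · intro hi
      have hkle : k*i ≤ h*j := by
        have := (Int.le_ediv_iff_mul_le hk).1 hi.2
        linarith [this]
      have hne : k*i ≠ h*j := by
        intro he
        have : k ∣ h*j := ⟨i, by linarith⟩
        have : k ∣ j := IsCoprime.dvd_of_dvd_mul_left hco.symm this
        have := Int.le_of_dvd (by omega) this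
        omega
      exact ⟨⟨hi.1, by omega⟩, by omega⟩
    · intro ⟨⟨h1, h2⟩, h3⟩
      refine ⟨h1, (Int.le_ediv_iff_mul_le hk).2 ?_⟩
      linarith [mul_comm i k]
  rw [← Finset.sum_filter, ← hfil]
  have hcg : ∀ i ∈ Icc (1:ℤ) g, (-1:ℚ)^(i+j) * ((k:ℚ)*(2*(i:ℚ)-1))
      = ((-1:ℚ)^j * k) * ((-1:ℚ)^i * (2*(i:ℚ)-1)) := by
    intro i _
    rw [neg_one_zpow_add]
    ring
  rw [Finset.sum_congr rfl hcg, ← Finset.mul_sum, sum_sign_mul g hg0, neg_one_zpow_add]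
  push_cast
  ring

-- generic involution on the rectangle
private lemma sum_invol (h k : ℤ) (f : ℤ × ℤ → ℚ) :
    ∑ p ∈ Icc (1:ℤ) (h-1) ×ˢ Icc (1:ℤ) (k-1), f p
      = ∑ p ∈ Icc (1:ℤ) (h-1) ×ˢ Icc (1:ℤ) (k-1), f (h - p.1, k - p.2) := by
  refine Finset.sum_nbij' (i := fun p => (h - p.1, k - p.2)) (j := fun p => (h - p.1, k - p.2))
    ?_ ?_ ?_ ?_ ?_
  · intro p hp
    simp only [mem_product, mem_Icc] at hp ⊢
    omega
  · intro p hp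
    simp only [mem_product, mem_Icc] at hp ⊢
    omega
  · intro p _
    simp
  · intro p _
    simp
  · intro p _
    simp [sub_sub_cancel]

-- sum of (-1)^(i+j) over rectangle is zero
private lemma sum_rect_zero (h k : ℤ) (hho : h % 2 = 1) (hko : k % 2 = 1) :
    ∑ p ∈ Icc (1:ℤ) (h-1) ×ˢ Icc (1:ℤ) (k-1), (-1:ℚ)^(p.1+p.2) = 0 := by
  rw [Finset.sum_product]
  have : ∀ i ∈ Icc (1:ℤ) (h-1), ∑ j ∈ Icc (1:ℤ) (k-1), (-1:ℚ)^(i+j)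
      = (-1:ℚ)^i * ∑ j ∈ Icc (1:ℤ) (k-1), (-1:ℚ)^j := by
    intro i _
    rw [Finset.mul_sum]
    exact Finset.sum_congr rfl fun j _ => neg_one_zpow_add i j
  rw [Finset.sum_congr rfl this]
  rcases le_or_gt k 0 with hk | hk
  · have : Icc (1:ℤ) (k-1) = ∅ := by rw [Finset.Icc_eq_empty_iff]; omega
    simp [this]
  · rw [sum_sign_even (by omega) (by omega)]
    simp

-- the D' sum is zero
private lemma sum_Dprime_zero (h k : ℤ) (hh : 0 < h) (hk : 0 < k) (hco : IsCoprime h k)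
    (hho : h % 2 = 1) (hko : k % 2 = 1) :
    ∑ p ∈ Icc (1:ℤ) (h-1) ×ˢ Icc (1:ℤ) (k-1),
      (((-1:ℚ)^(p.1+p.2)) * (if k*p.1 < h*p.2 then (1:ℚ) else 0)) = 0 := by
  set S := Icc (1:ℤ) (h-1) ×ˢ Icc (1:ℤ) (k-1) with hS
  have hne : ∀ p ∈ S, k*p.1 ≠ h*p.2 := by
    intro p hp he
    simp only [hS, mem_product, mem_Icc] at hp
    have h1 : k ∣ h * p.2 := ⟨p.1, he.symm⟩
    have h2 : k ∣ p.2 := IsCoprime.dvd_of_dvd_mul_left hco.symm h1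
    have := Int.le_of_dvd (by omega) h2
    omega
  have key : ∀ p ∈ S, (((-1:ℚ)^(p.1+p.2)) * (if k*p.1 < h*p.2 then (1:ℚ) else 0))
      + (((-1:ℚ)^(p.1+p.2)) * (if h*p.2 < k*p.1 then (1:ℚ) else 0)) = (-1:ℚ)^(p.1+p.2) := by
    intro p hp
    have := hne p hp
    rcases lt_trichotomy (k*p.1) (h*p.2) with hlt | heq | hgt
    · rw [if_pos hlt, if_neg (by omega)]; ring
    · exact absurd heq (hne p hp)
    · rw [if_neg (by omega), if_pos hgt]; ring
  -- second sum equals first sum by involution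
  have hswap : ∑ p ∈ S, (((-1:ℚ)^(p.1+p.2)) * (if h*p.2 < k*p.1 then (1:ℚ) else 0))
      = ∑ p ∈ S, (((-1:ℚ)^(p.1+p.2)) * (if k*p.1 < h*p.2 then (1:ℚ) else 0)) := by
    rw [hS, sum_invol h k]
    refine Finset.sum_congr rfl ?_
    intro p hp
    simp only [mem_product, mem_Icc] at hp
    have hsign : (-1:ℚ)^(h - p.1 + (k - p.2)) = (-1:ℚ)^(p.1+p.2) :=
      neg_one_zpow_congr (by omega)
    have hcond : (h*(k - p.2) < k*(h - p.1)) ↔ (k*p.1 < h*p.2) := by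
      constructor <;> intro hx <;> nlinarith
    rw [hsign]
    congr 1
    simp only [hcond]
  have := Finset.sum_congr rfl key
  rw [Finset.sum_add_distrib, hswap, sum_rect_zero h k hho hko] at this
  linarith

private lemma sum_alt' {m : ℤ} (hm : 0 < m) (hm2 : m % 2 = 1) :
    ∑ μ ∈ Ico (0:ℤ) m, (-1:ℚ)^μ * μ = ((m:ℚ)-1)/2 := by
  obtain ⟨n, hn⟩ : ∃ n : ℕ, m = 2*(n:ℤ)+1 := ⟨((m-1)/2).toNat, by omega⟩
  subst hn
  rw [sum_alt n]
  push_cast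
  ring

private lemma sum_mult (d m : ℤ) (hd : 0 < d) (hd2 : d % 2 = 1) (hm : 0 ≤ m)
    (f : ℤ → ℚ) :
    ∑ μ ∈ Ico (0:ℤ) (d*m), (if d ∣ μ then f μ else 0) = ∑ t ∈ Ico (0:ℤ) m, f (d*t) := by
  rw [← Finset.sum_filter]
  refine (Finset.sum_nbij' (i := fun t => d * t) (j := fun t => t / d) ?_ ?_ ?_ ?_ ?_).symm
  · intro a ha
    simp only [mem_Ico] at ha
    simp only [mem_filter, mem_Ico]
    exact ⟨⟨by nlinarith, by nlinarith⟩, ⟨a, rfl⟩⟩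
  · intro a ha
    simp only [mem_filter, mem_Ico] at ha
    obtain ⟨⟨h1, h2⟩, c, hc⟩ := ha
    subst hc
    simp only [mem_Ico]
    rw [Int.mul_ediv_cancel_left _ (by omega)]
    exact ⟨by nlinarith, by nlinarith⟩
  · intro a _
    rw [Int.mul_ediv_cancel_left _ (by omega)]
  · intro a ha
    simp only [mem_filter] at ha
    obtain ⟨-, c, hc⟩ := ha
    subst hc
    rw [Int.mul_ediv_cancel_left _ (by omega)]
  · intro a _
    rfl

private lemma sum_G (h k : ℤ) (hh : 0 < h) (hk : 0 < k) (hco : IsCoprime h k)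
    (hho : h % 2 = 1) (hko : k % 2 = 1) :
    ∑ μ ∈ Ico (0:ℤ) (h*k), (if ¬(h ∣ μ) ∧ ¬(k ∣ μ) then (-1:ℚ)^μ * μ else 0)
      = -((h:ℚ)-1)*((k:ℚ)-1)/2 := by
  have hsplit : ∀ μ : ℤ, (-1:ℚ)^μ * μ
      = (if ¬(h ∣ μ) ∧ ¬(k ∣ μ) then (-1:ℚ)^μ * μ else 0)
      + (if h ∣ μ then (-1:ℚ)^μ * μ else 0)
      + (if k ∣ μ then (if ¬(h ∣ μ) then (-1:ℚ)^μ * μ else 0) else 0) := by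
    intro μ
    by_cases h1 : h ∣ μ <;> by_cases h2 : k ∣ μ <;> simp [h1, h2]
  have htot : ∑ μ ∈ Ico (0:ℤ) (h*k), (-1:ℚ)^μ * μ = ((h:ℚ)*(k:ℚ)-1)/2 := by
    have := sum_alt' (m := h*k) (by positivity) (by rw [odd_mul_emod_two hho]; exact hko)
    rw [this]
    push_cast
    ring
  have hH : ∑ μ ∈ Ico (0:ℤ) (h*k), (if h ∣ μ then (-1:ℚ)^μ * μ else 0)
      = (h:ℚ) * (((k:ℚ)-1)/2) := by
    rw [sum_mult h k hh hho hk.le]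
    have : ∀ t ∈ Ico (0:ℤ) k, (-1:ℚ)^(h*t) * ((h*t : ℤ):ℚ) = (h:ℚ) * ((-1:ℚ)^t * t) := by
      intro t _
      rw [neg_one_zpow_congr (odd_mul_emod_two hho)]
      push_cast
      ring
    rw [Finset.sum_congr rfl this, ← Finset.mul_sum, sum_alt' hk hko]
  have hK : ∑ μ ∈ Ico (0:ℤ) (h*k), (if k ∣ μ then (if ¬(h ∣ μ) then (-1:ℚ)^μ * μ else 0) else 0)
      = (k:ℚ) * (((h:ℚ)-1)/2) := by
    rw [show h*k = k*h by ring, sum_mult k h hk hko hh.le]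
    have : ∀ t ∈ Ico (0:ℤ) h, (if ¬(h ∣ k*t) then (-1:ℚ)^(k*t) * ((k*t : ℤ):ℚ) else 0)
        = (k:ℚ) * ((-1:ℚ)^t * t) := by
      intro t ht
      simp only [mem_Ico] at ht
      rcases eq_or_lt_of_le ht.1 with h0 | h0
      · rw [← h0]
        simp
      · rw [if_pos]
        · rw [neg_one_zpow_congr (odd_mul_emod_two hko)]
          push_cast
          ring
        · intro hdvd
          have : h ∣ t := IsCoprime.dvd_of_dvd_mul_left hco hdvd
          have := Int.le_of_dvd (by omega) this
          omega
    rw [Finset.sum_congr rfl this, ← Finset.mul_sum, sum_alt' hh hho]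
  have := Finset.sum_congr rfl (fun μ (_ : μ ∈ Ico (0:ℤ) (h*k)) => hsplit μ)
  rw [htot, Finset.sum_add_distrib, Finset.sum_add_distrib, hH, hK] at this
  have hgoal := this
  push_cast at hgoal ⊢
  linarith

private lemma sum_phi (h k : ℤ) (hh : 0 < h) (hk : 0 < k) (hco : IsCoprime h k)
    (f : ℤ → ℚ) :
    ∑ p ∈ Icc (0:ℤ) (h-1) ×ˢ Icc (0:ℤ) (k-1), f ((k*p.1 - h*p.2) % (h*k))
      = ∑ μ ∈ Ico (0:ℤ) (h*k), f μ := by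
  have hhk : (0:ℤ) < h*k := by positivity
  have hinj : ∀ p ∈ Icc (0:ℤ) (h-1) ×ˢ Icc (0:ℤ) (k-1),
      ∀ q ∈ Icc (0:ℤ) (h-1) ×ˢ Icc (0:ℤ) (k-1),
      (k*p.1 - h*p.2) % (h*k) = (k*q.1 - h*q.2) % (h*k) → p = q := by
    intro p hp q hq he
    simp only [mem_product, mem_Icc] at hp hq
    have hdvd : h*k ∣ (k*p.1 - h*p.2) - (k*q.1 - h*q.2) := by
      exact Int.ModEq.dvd (Int.ModEq.symm he)
    have h1 : p.1 = q.1 := by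
      have hd1 : h ∣ k * (p.1 - q.1) := by
        have : h ∣ (k*p.1 - h*p.2) - (k*q.1 - h*q.2) := dvd_trans ⟨k, by ring⟩ hdvd
        obtain ⟨c, hc⟩ := this
        exact ⟨c + (p.2 - q.2), by linarith [hc]⟩
      obtain ⟨c, hc⟩ := IsCoprime.dvd_of_dvd_mul_left hco hd1
      rcases lt_trichotomy c 0 with h0 | h0 | h0
      · nlinarith
      · subst h0; simp only [mul_zero] at hc; omega
      · nlinarith
    have h2 : p.2 = q.2 := by
      have hd2 : k ∣ h * (p.2 - q.2) := by
        have : k ∣ (k*p.1 - h*p.2) - (k*q.1 - h*q.2) := dvd_trans ⟨h, by ring⟩ hdvd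
        obtain ⟨c, hc⟩ := this
        exact ⟨p.1 - q.1 - c, by linarith [hc]⟩
      obtain ⟨c, hc⟩ := IsCoprime.dvd_of_dvd_mul_left hco.symm hd2
      rcases lt_trichotomy c 0 with h0 | h0 | h0
      · nlinarith
      · subst h0; simp only [mul_zero] at hc; omega
      · nlinarith
    exact Prod.ext h1 h2
  have hmem : ∀ p ∈ Icc (0:ℤ) (h-1) ×ˢ Icc (0:ℤ) (k-1),
      (k*p.1 - h*p.2) % (h*k) ∈ Ico (0:ℤ) (h*k) := by
    intro p _
    simp only [mem_Ico]
    exact ⟨Int.emod_nonneg _ (by omega), Int.emod_lt_of_pos _ hhk⟩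
  have hcard : (Ico (0:ℤ) (h*k)).card ≤ ((Icc (0:ℤ) (h-1)) ×ˢ (Icc (0:ℤ) (k-1))).card := by
    rw [Finset.card_product, Int.card_Ico, Int.card_Icc, Int.card_Icc]
    have e1 : ((h*k - 0).toNat : ℤ) = h*k := by omega
    have e2 : ((h-1+1-0).toNat : ℤ) = h := by omega
    have e3 : ((k-1+1-0).toNat : ℤ) = k := by omega
    have : (((h-1+1-0).toNat * (k-1+1-0).toNat : ℕ) : ℤ) = h*k := by
      push_cast
      rw [e2, e3]
    omega
  refine Finset.sum_bij (i := fun p _ => (k*p.1 - h*p.2) % (h*k)) hmem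
    (fun p hp q hq => hinj p hp q hq) ?_ (fun p _ => rfl)
  intro b hb
  obtain ⟨a, ha, hab⟩ := Finset.surj_on_of_inj_on_of_card_le
    (fun p _ => (k*p.1 - h*p.2) % (h*k)) hmem (fun p q hp hq => hinj p hp q hq) hcard b hb
  exact ⟨a, ha, hab.symm⟩

private lemma phi_val (h k : ℤ) (hh : 0 < h) (hk : 0 < k) (hco : IsCoprime h k)
    (hho : h % 2 = 1) (hko : k % 2 = 1) :
    ∀ p ∈ Icc (0:ℤ) (h-1) ×ˢ Icc (0:ℤ) (k-1),
    (if ¬(h ∣ (k*p.1 - h*p.2) % (h*k)) ∧ ¬(k ∣ (k*p.1 - h*p.2) % (h*k))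
        then (-1:ℚ)^((k*p.1 - h*p.2) % (h*k)) * (((k*p.1 - h*p.2) % (h*k) : ℤ):ℚ) else 0)
    = (if 1 ≤ p.1 ∧ 1 ≤ p.2 then
        (-1:ℚ)^(p.1+p.2) * ((|k*p.1 - h*p.2| : ℤ):ℚ)
          - (if k*p.1 < h*p.2 then (h:ℚ)*(k:ℚ)*(-1:ℚ)^(p.1+p.2) else 0)
      else 0) := by
  intro p hp
  simp only [mem_product, mem_Icc] at hp
  obtain ⟨⟨hp1, hp2⟩, hp3, hp4⟩ := hp
  have hhk : (0:ℤ) < h*k := by positivity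
  set m := k*p.1 - h*p.2 with hm
  have hmlb : -(h*k) < m := by nlinarith
  have hmub : m < h*k := by nlinarith
  rcases eq_or_lt_of_le hp1 with h10 | h11
  · have hdvd : h ∣ m % (h*k) := by
      have h1 : h ∣ m := by rw [hm, ← h10]; exact ⟨-p.2, by ring⟩
      have h2 : h ∣ h*k * (m / (h*k)) := ⟨k * (m / (h*k)), by ring⟩
      rw [Int.emod_def]
      exact dvd_sub h1 h2
    rw [if_neg (by tauto), if_neg (by omega)]
  rcases eq_or_lt_of_le hp3 with h20 | h21
  · have hdvd : k ∣ m % (h*k) := by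
      have h1 : k ∣ m := by rw [hm, ← h20]; exact ⟨p.1, by ring⟩
      have h2 : k ∣ h*k * (m / (h*k)) := ⟨h * (m / (h*k)), by ring⟩
      rw [Int.emod_def]
      exact dvd_sub h1 h2
    rw [if_neg (by tauto), if_neg (by omega)]
  have hm0 : m ≠ 0 := by
    intro he
    have h1 : k ∣ h * p.2 := ⟨p.1, by linarith⟩
    have h2 : k ∣ p.2 := IsCoprime.dvd_of_dvd_mul_left hco.symm h1
    have := Int.le_of_dvd (by omega) h2
    omega
  have hdh : ¬ (h ∣ k*p.1) := by
    intro hdvd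
    have h1 : h ∣ p.1 := IsCoprime.dvd_of_dvd_mul_left hco hdvd
    have := Int.le_of_dvd (by omega) h1
    omega
  have hdk : ¬ (k ∣ h*p.2) := by
    intro hdvd
    have h1 : k ∣ p.2 := IsCoprime.dvd_of_dvd_mul_left hco.symm hdvd
    have := Int.le_of_dvd (by omega) h1
    omega
  have hpar1 : (k*p.1) % 2 = p.1 % 2 := odd_mul_emod_two hko
  have hpar2 : (h*p.2) % 2 = p.2 % 2 := odd_mul_emod_two hho
  have hparhk : (h*k) % 2 = 1 := by rw [odd_mul_emod_two hho]; exact hko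
  rw [if_pos (show (1:ℤ) ≤ p.1 ∧ (1:ℤ) ≤ p.2 from ⟨by omega, by omega⟩)]
  rcases lt_or_gt_of_ne hm0 with hneg | hpos
  · have hphi : m % (h*k) = m + h*k := by
      have h1 := Int.add_mul_emod_self_left (a := m) (b := h*k) (c := 1)
      rw [mul_one] at h1
      rw [← h1, Int.emod_eq_of_lt (by omega) (by omega)]
    have hnh : ¬ (h ∣ m + h*k) := by
      intro ⟨c, hc⟩
      exact hdh ⟨c + p.2 - k, by linarith⟩
    have hnk : ¬ (k ∣ m + h*k) := by
      intro ⟨c, hc⟩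
      exact hdk ⟨p.1 + h - c, by linarith⟩
    rw [hphi, if_pos (show ¬(h ∣ m + h*k) ∧ ¬(k ∣ m + h*k) from ⟨hnh, hnk⟩),
      if_pos (show k*p.1 < h*p.2 by linarith)]
    have hsign : (-1:ℚ)^(m + h*k) = -((-1:ℚ)^(p.1+p.2)) := by
      rw [neg_one_zpow_congr (b := p.1+p.2+1) (by omega), neg_one_zpow_add, zpow_one]
      ring
    rw [hsign, abs_of_neg hneg]
    push_cast
    ring
  · have hphi : m % (h*k) = m := Int.emod_eq_of_lt (by omega) hmub
    have hnh : ¬ (h ∣ m) := by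
      intro ⟨c, hc⟩
      exact hdh ⟨c + p.2, by linarith⟩
    have hnk : ¬ (k ∣ m) := by
      intro ⟨c, hc⟩
      exact hdk ⟨p.1 - c, by linarith⟩
    rw [hphi, if_pos (show ¬(h ∣ m) ∧ ¬(k ∣ m) from ⟨hnh, hnk⟩),
      if_neg (show ¬(k*p.1 < h*p.2) by linarith)]
    have hsign : (-1:ℚ)^m = (-1:ℚ)^(p.1+p.2) := neg_one_zpow_congr (by omega)
    rw [hsign, abs_of_pos hpos]
    push_cast
    ring

-- (c) : the Q evaluation
private lemma Q_eval (h k : ℤ) (hh : 0 < h) (hk : 0 < k) (hco : IsCoprime h k)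
    (hho : h % 2 = 1) (hko : k % 2 = 1) :
    ∑ p ∈ Icc (1:ℤ) (h-1) ×ˢ Icc (1:ℤ) (k-1),
      (-1:ℚ)^(p.1+p.2) * ((|k*p.1 - h*p.2| : ℤ):ℚ) = -((h:ℚ)-1)*((k:ℚ)-1)/2 := by
  have step1 : ∑ p ∈ Icc (0:ℤ) (h-1) ×ˢ Icc (0:ℤ) (k-1),
      (if ¬(h ∣ (k*p.1 - h*p.2) % (h*k)) ∧ ¬(k ∣ (k*p.1 - h*p.2) % (h*k))
        then (-1:ℚ)^((k*p.1 - h*p.2) % (h*k)) * (((k*p.1 - h*p.2) % (h*k) : ℤ):ℚ) else 0)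
      = -((h:ℚ)-1)*((k:ℚ)-1)/2 := by
    rw [sum_phi h k hh hk hco (fun μ => if ¬(h ∣ μ) ∧ ¬(k ∣ μ) then (-1:ℚ)^μ * (μ:ℚ) else 0)]
    exact sum_G h k hh hk hco hho hko
  rw [Finset.sum_congr rfl (phi_val h k hh hk hco hho hko)] at step1
  -- restrict to the inner rectangle
  have hsub : Icc (1:ℤ) (h-1) ×ˢ Icc (1:ℤ) (k-1) ⊆ Icc (0:ℤ) (h-1) ×ˢ Icc (0:ℤ) (k-1) := by
    intro p hp
    simp only [mem_product, mem_Icc] at hp ⊢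
    omega
  rw [← Finset.sum_subset hsub (by
    intro p hp hnp
    simp only [mem_product, mem_Icc] at hp hnp
    rw [if_neg (by omega)])] at step1
  have : ∀ p ∈ Icc (1:ℤ) (h-1) ×ˢ Icc (1:ℤ) (k-1),
      (if 1 ≤ p.1 ∧ 1 ≤ p.2 then
        (-1:ℚ)^(p.1+p.2) * ((|k*p.1 - h*p.2| : ℤ):ℚ)
          - (if k*p.1 < h*p.2 then (h:ℚ)*(k:ℚ)*(-1:ℚ)^(p.1+p.2) else 0)
      else 0)
      = (-1:ℚ)^(p.1+p.2) * ((|k*p.1 - h*p.2| : ℤ):ℚ)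
          - (h:ℚ)*(k:ℚ)*(((-1:ℚ)^(p.1+p.2)) * (if k*p.1 < h*p.2 then (1:ℚ) else 0)) := by
    intro p hp
    simp only [mem_product, mem_Icc] at hp
    rw [if_pos (show (1:ℤ) ≤ p.1 ∧ (1:ℤ) ≤ p.2 from ⟨hp.1.1, hp.2.1⟩)]
    split_ifs <;> ring
  rw [Finset.sum_congr rfl this, Finset.sum_sub_distrib, ← Finset.mul_sum,
    sum_Dprime_zero h k hh hk hco hho hko] at step1
  simpa using step1

-- (a)+(b)+(d)

theorem stmt_4 (h k : ℤ) (hh : 0 < h) (hk : 0 < k) (hco : IsCoprime h k)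
    (hho : Odd h) (hko : Odd k) :
    (k : ℚ) * B1 h k + (h : ℚ) * B1 k h = (1 / 2) * ((h : ℚ) - 1) * ((k : ℚ) - 1) := by
  have hho' : h % 2 = 1 := Int.odd_iff.1 hho
  have hko' : k % 2 = 1 := Int.odd_iff.1 hko
  set S := Icc (1:ℤ) (h-1) ×ˢ Icc (1:ℤ) (k-1) with hS
  have hne : ∀ p ∈ S, k*p.1 ≠ h*p.2 := by
    intro p hp he
    simp only [hS, mem_product, mem_Icc] at hp
    have h1 : k ∣ h * p.2 := ⟨p.1, he.symm⟩
    have h2 : k ∣ p.2 := IsCoprime.dvd_of_dvd_mul_left hco.symm h1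
    have := Int.le_of_dvd (by omega) h2
    omega
  -- step (a): LHS = P
  have hP : (k : ℚ) * B1 h k + (h : ℚ) * B1 k h
      = ∑ p ∈ S, (-1:ℚ)^(p.1+p.2)
          * (if k*p.1 < h*p.2 then (k:ℚ)*(2*(p.1:ℚ)-1) else (h:ℚ)*(2*(p.2:ℚ)-1)) := by
    rw [B1_expand h k hh hk hco, B1_expand k h hk hh hco.symm]
    rw [Finset.sum_comm]
    rw [show (∑ i ∈ Icc (1:ℤ) (h-1), ∑ j ∈ Icc (1:ℤ) (k-1),
        (if k*i < h*j then (-1:ℚ)^(i+j) * ((k:ℚ)*(2*(i:ℚ)-1)) else 0))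
      = ∑ p ∈ S, (if k*p.1 < h*p.2 then (-1:ℚ)^(p.1+p.2) * ((k:ℚ)*(2*(p.1:ℚ)-1)) else 0) by rw [hS, Finset.sum_product]]
    rw [show (∑ j ∈ Icc (1:ℤ) (h-1), ∑ i ∈ Icc (1:ℤ) (k-1),
        (if h*i < k*j then (-1:ℚ)^(i+j) * ((h:ℚ)*(2*(i:ℚ)-1)) else 0))
      = ∑ p ∈ S, (if h*p.2 < k*p.1 then (-1:ℚ)^(p.2+p.1) * ((h:ℚ)*(2*(p.2:ℚ)-1)) else 0) by rw [hS, Finset.sum_product]]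
    rw [← Finset.sum_add_distrib]
    refine Finset.sum_congr rfl ?_
    intro p hp
    have := hne p hp
    rcases lt_trichotomy (k*p.1) (h*p.2) with hlt | heq | hgt
    · rw [if_pos hlt, if_neg (by omega), if_pos hlt]
      ring
    · exact absurd heq this
    · rw [if_neg (by omega), if_pos hgt, if_neg (by omega), add_comm p.2 p.1]
      ring
  -- step (b): involution
  have hinv : (k : ℚ) * B1 h k + (h : ℚ) * B1 k h
      = ∑ p ∈ S, (-1:ℚ)^(p.1+p.2)
          * (if h*p.2 < k*p.1 then (k:ℚ)*(2*((h:ℚ)-(p.1:ℚ))-1) else (h:ℚ)*(2*((k:ℚ)-(p.2:ℚ))-1)) := by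
    rw [hP, hS, sum_invol h k]
    refine Finset.sum_congr rfl ?_
    intro p hp
    simp only [mem_product, mem_Icc] at hp
    have hsign : (-1:ℚ)^(h - p.1 + (k - p.2)) = (-1:ℚ)^(p.1+p.2) :=
      neg_one_zpow_congr (by omega)
    have hcond : (k*(h - p.1) < h*(k - p.2)) ↔ (h*p.2 < k*p.1) := by
      constructor <;> intro hx <;> nlinarith
    rw [hsign]
    congr 1
    simp only [hcond]
    split_ifs
    · push_cast; ring
    · push_cast; ring
  have hpt : ∀ p ∈ S, ((-1:ℚ)^(p.1+p.2)
        * (if k*p.1 < h*p.2 then (k:ℚ)*(2*(p.1:ℚ)-1) else (h:ℚ)*(2*(p.2:ℚ)-1))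
      + (-1:ℚ)^(p.1+p.2)
        * (if h*p.2 < k*p.1 then (k:ℚ)*(2*((h:ℚ)-(p.1:ℚ))-1) else (h:ℚ)*(2*((k:ℚ)-(p.2:ℚ))-1)))
      = (2*(h:ℚ)*(k:ℚ)-(h:ℚ)-(k:ℚ)) * (-1:ℚ)^(p.1+p.2)
        - 2 * ((-1:ℚ)^(p.1+p.2) * ((|k*p.1 - h*p.2| : ℤ):ℚ)) := by
    intro p hp
    have hne' := hne p hp
    rcases lt_trichotomy (k*p.1) (h*p.2) with hlt | heq | hgt
    · rw [if_pos hlt, if_neg (by omega), abs_of_neg (by omega)]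
      push_cast
      ring
    · exact absurd heq hne'
    · rw [if_neg (by omega), if_pos hgt, abs_of_pos (by omega)]
      push_cast
      ring
  have h2P : 2 * ((k : ℚ) * B1 h k + (h : ℚ) * B1 k h) = ((h:ℚ)-1)*((k:ℚ)-1) := by
    calc 2 * ((k : ℚ) * B1 h k + (h : ℚ) * B1 k h)
        = (∑ p ∈ S, (-1:ℚ)^(p.1+p.2)
            * (if k*p.1 < h*p.2 then (k:ℚ)*(2*(p.1:ℚ)-1) else (h:ℚ)*(2*(p.2:ℚ)-1)))
          + ∑ p ∈ S, (-1:ℚ)^(p.1+p.2)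
            * (if h*p.2 < k*p.1 then (k:ℚ)*(2*((h:ℚ)-(p.1:ℚ))-1) else (h:ℚ)*(2*((k:ℚ)-(p.2:ℚ))-1)) := by
          rw [← hP, ← hinv]; ring
      _ = ∑ p ∈ S, (((-1:ℚ)^(p.1+p.2)
            * (if k*p.1 < h*p.2 then (k:ℚ)*(2*(p.1:ℚ)-1) else (h:ℚ)*(2*(p.2:ℚ)-1)))
          + (-1:ℚ)^(p.1+p.2)
            * (if h*p.2 < k*p.1 then (k:ℚ)*(2*((h:ℚ)-(p.1:ℚ))-1) else (h:ℚ)*(2*((k:ℚ)-(p.2:ℚ))-1))) :=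
          (Finset.sum_add_distrib).symm
      _ = ∑ p ∈ S, ((2*(h:ℚ)*(k:ℚ)-(h:ℚ)-(k:ℚ)) * (-1:ℚ)^(p.1+p.2)
          - 2 * ((-1:ℚ)^(p.1+p.2) * ((|k*p.1 - h*p.2| : ℤ):ℚ))) := Finset.sum_congr rfl hpt
      _ = (2*(h:ℚ)*(k:ℚ)-(h:ℚ)-(k:ℚ)) * (∑ p ∈ S, (-1:ℚ)^(p.1+p.2))
          - 2 * ∑ p ∈ S, (-1:ℚ)^(p.1+p.2) * ((|k*p.1 - h*p.2| : ℤ):ℚ) := by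
          rw [Finset.sum_sub_distrib, Finset.mul_sum, Finset.mul_sum]
      _ = ((h:ℚ)-1)*((k:ℚ)-1) := by
          rw [hS, sum_rect_zero h k hho' hko', Q_eval h k hh hk hco hho' hko']
          ring
  linarith [h2P]
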